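/- Strict monotonicity: if (v,ρ) ∈ GP and (v',ρ') ∈ GP, and at least one of (v',ρ) and (v,ρ') is NOT a ground pair, then ⟨v − v', ρ − ρ'⟩ < 0. -/
import Mathlib

/-- Excess energy `Γ(v,ρ) := F(ρ) + ⟨v,ρ⟩ − E(v)`. -/
noncomputable def Gam {B : Type*} [NormedAddCommGroup B] [NormedSpace ℝ B]
    (F : B → EReal) (E : (B →L[ℝ] ℝ) → ℝ) (v : B →L[ℝ] ℝ) (ρ : B) : EReal :=
  F ρ + (v ρ : EReal) - (E v : EReal)

lemma gam_finite {B : Type*} [NormedAddCommGroup B] [NormedSpace ℝ B]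
    (F : B → EReal) (hFbot : ∀ σ : B, F σ ≠ ⊥)
    (E : (B →L[ℝ] ℝ) → ℝ) (v : B →L[ℝ] ℝ) (ρ : B)
    (h : Gam F E v ρ = 0) : ∃ r : ℝ, F ρ = (r : EReal) ∧ r + v ρ - E v = 0 := by
  unfold Gam at h
  have htop : F ρ ≠ ⊤ := by
    intro ht
    rw [ht, EReal.top_add_coe, EReal.top_sub_coe] at h
    exact EReal.top_ne_zero h
  lift F ρ to ℝ using ⟨htop, hFbot ρ⟩ with r hr
  refine ⟨r, rfl, ?_⟩
  rw [← EReal.coe_add, ← EReal.coe_sub] at h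
  exact_mod_cast h

lemma gam_eq_coe {B : Type*} [NormedAddCommGroup B] [NormedSpace ℝ B]
    (F : B → EReal) (E : (B →L[ℝ] ℝ) → ℝ) (v : B →L[ℝ] ℝ) (ρ : B)
    (r : ℝ) (hr : F ρ = (r : EReal)) :
    Gam F E v ρ = ((r + v ρ - E v : ℝ) : EReal) := by
  unfold Gam
  rw [hr, ← EReal.coe_add, ← EReal.coe_sub]

/-- Strict monotonicity for ground pairs. -/
theorem strict_monotonicity
    {B : Type*} [NormedAddCommGroup B] [NormedSpace ℝ B]
    (F : B → EReal) (hFbot : ∀ σ : B, F σ ≠ ⊥)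
    (E : (B →L[ℝ] ℝ) → ℝ)
    (hE : ∀ v : B →L[ℝ] ℝ, (⨅ σ : B, F σ + (v σ : EReal)) = (E v : EReal))
    (v v' : B →L[ℝ] ℝ) (ρ ρ' : B)
    (hGP : Gam F E v ρ = 0) (hGP' : Gam F E v' ρ' = 0)
    (hnot : Gam F E v' ρ ≠ 0 ∨ Gam F E v ρ' ≠ 0) :
    (v - v') (ρ - ρ') < 0 := by
  obtain ⟨r, hFr, hr⟩ := gam_finite F hFbot E v ρ hGP
  obtain ⟨r', hFr', hr'⟩ := gam_finite F hFbot E v' ρ' hGP'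
  -- nonnegativity of the cross excess energies
  have hge : ∀ (w : B →L[ℝ] ℝ) (σ : B) (s : ℝ), F σ = (s : EReal) → E w ≤ s + w σ := by
    intro w σ s hs
    have hle : (E w : EReal) ≤ F σ + (w σ : EReal) := by
      rw [← hE w]; exact iInf_le _ σ
    rw [hs, ← EReal.coe_add] at hle
    exact_mod_cast hle
  have ha : E v' ≤ r + v' ρ := hge v' ρ r hFr
  have hb : E v ≤ r' + v ρ' := hge v ρ' r' hFr'
  have hG1 : Gam F E v' ρ = ((r + v' ρ - E v' : ℝ) : EReal) := gam_eq_coe F E v' ρ r hFr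
  have hG2 : Gam F E v ρ' = ((r' + v ρ' - E v : ℝ) : EReal) := gam_eq_coe F E v ρ' r' hFr'
  have hne : r + v' ρ - E v' ≠ 0 ∨ r' + v ρ' - E v ≠ 0 := by
    rcases hnot with h | h
    · left; intro h0; apply h; rw [hG1, h0]; exact_mod_cast rfl
    · right; intro h0; apply h; rw [hG2, h0]; exact_mod_cast rfl
  have hsum : 0 < (r + v' ρ - E v') + (r' + v ρ' - E v) := by
    rcases hne with h | h
    · have : 0 < r + v' ρ - E v' := lt_of_le_of_ne (by linarith) (Ne.symm h)
      linarith
    · have : 0 < r' + v ρ' - E v := lt_of_le_of_ne (by linarith) (Ne.symm h)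
      linarith
  simp only [ContinuousLinearMap.sub_apply, map_sub]
  linarith
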